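/- Let R be a commutative noetherian normal domain and let x_1, x_2, x_3 be nonzero elements such that ht(x_i, x_j) = 2 for i ≠ j, ht(x_1, x_2, x_3) = 3, and for all positive integers n_1, n_2, n_3 the colon conditions ((x_1^{n_1}, x_2^{n_2}) : x_3) = ((x_1^{n_1}, x_2^{n_2}) : x_3^2), ((x_2^{n_2}, x_3^{n_3}) : x_1) = ((x_2^{n_2}, x_3^{n_3}) : x_1^2), and ((x_1^{n_1}, x_3^{n_3}) : x_2) = ((x_1^{n_1}, x_3^{n_3}) : x_2^2) hold. Let T_3 be the (finite) set of all associated prime ideals of the modules R/(x_1^{i_1}, x_2^{i_2}, x_3^{i_3}) taken over all positive integers i_1, i_2, i_3 with i_1 + i_2 + i_3 ≤ 6. Then for all positive integers n_1, n_2, n_3, every associated prime ideal of R/(x_1^{n_1}, x_2^{n_2}, x_3^{n_3}) lies in T_3. -/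

import Mathlib

/-- The height of an ideal: the infimum of the heights of the primes containing it. -/
noncomputable def idealHeight (R : Type) [CommRing R] (I : Ideal R) : ℕ∞ :=
  ⨅ (P : PrimeSpectrum R) (_ : I ≤ P.asIdeal), Order.height P


variable {R : Type*} [CommRing R] [IsNoetherianRing R]

lemma smul_mk_eq {I : Ideal R} (r y : R) :
    r • (Ideal.Quotient.mk I) y = Ideal.Quotient.mk I (r * y) := rfl

lemma mem_ass_quot_iff {I P : Ideal R} :
    P ∈ associatedPrimes R (R ⧸ I) ↔ P.IsPrime ∧ ∃ y : R, ∀ r, r ∈ P ↔ r * y ∈ I := by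
  rw [AssociatedPrimes.mem_iff, isAssociatedPrime_iff]
  constructor
  · rintro ⟨hP, m, hm⟩
    obtain ⟨y, rfl⟩ := Ideal.Quotient.mk_surjective m
    refine ⟨hP, y, fun r => ?_⟩
    rw [hm, Submodule.mem_colon_singleton, Submodule.mem_bot, smul_mk_eq,
      Ideal.Quotient.eq_zero_iff_mem]
  · rintro ⟨hP, y, hy⟩
    refine ⟨hP, Ideal.Quotient.mk I y, ?_⟩
    ext r
    rw [Submodule.mem_colon_singleton, Submodule.mem_bot, smul_mk_eq, Ideal.Quotient.eq_zero_iff_mem]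
    exact hy r

/-- `Ass(R/(I:x)) ⊆ Ass(R/I)` (lemma D). -/
lemma assD {I P : Ideal R} (x : R)
    (h : P ∈ associatedPrimes R (R ⧸ I.colon (Ideal.span {x}))) :
    P ∈ associatedPrimes R (R ⧸ I) := by
  rw [mem_ass_quot_iff] at h ⊢
  obtain ⟨hP, y, hy⟩ := h
  refine ⟨hP, y * x, fun r => ?_⟩
  rw [hy r, Ideal.mem_colon_span_singleton, mul_assoc]

/-- `Ass(R/I) ⊆ Ass(R/(I:x)) ∪ Ass(R/(I+(x)))` (lemma C). -/
lemma assC {I P : Ideal R} (x : R)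
    (h : P ∈ associatedPrimes R (R ⧸ I)) :
    P ∈ associatedPrimes R (R ⧸ I.colon (Ideal.span {x})) ∨
      P ∈ associatedPrimes R (R ⧸ (I ⊔ Ideal.span {x})) := by
  rw [mem_ass_quot_iff] at h
  obtain ⟨hP, y, hy⟩ := h
  by_cases hcase : ∀ r : R, r * y ∈ I ⊔ Ideal.span {x} → r * y ∈ I
  · right
    rw [mem_ass_quot_iff]
    refine ⟨hP, y, fun r => ?_⟩
    constructor
    · intro hr
      exact Ideal.mem_sup_left ((hy r).1 hr)
    · intro hr
      exact (hy r).2 (hcase r hr)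
  · left
    push_neg at hcase
    obtain ⟨r, hr1, hr2⟩ := hcase
    rw [Submodule.mem_sup] at hr1
    obtain ⟨i, hi, z, hz, hiz⟩ := hr1
    rw [Ideal.mem_span_singleton'] at hz
    obtain ⟨s, rfl⟩ := hz
    -- r * y = i + s * x,  r * y ∉ I
    have hrP : r ∉ P := fun hrr => hr2 ((hy r).1 hrr)
    rw [mem_ass_quot_iff]
    refine ⟨hP, s, fun t => ?_⟩
    rw [Ideal.mem_colon_span_singleton]
    constructor
    · intro htP
      -- t * s * x = t * (r*y - i) = t*r*y - t*i ∈ I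
      have h1 : t * (r * y) ∈ I := by
        have := (hy (t * r)).1 (P.mul_mem_right r htP)
        rwa [mul_assoc] at this
      have h2 : t * s * x = t * (r * y) - t * i := by linear_combination t * hiz
      rw [h2]
      exact Ideal.sub_mem I h1 (I.mul_mem_left t hi)
    · intro htsx
      -- t * r * y = t * i + t * s * x ∈ I, so t*r ∈ P, so t ∈ P
      have h1 : t * r * y ∈ I := by
        have : t * r * y = t * i + t * s * x := by linear_combination (-t) * hiz
        rw [this]
        exact Ideal.add_mem I (I.mul_mem_left t hi) htsx
      have := (hy (t * r)).2 h1
      exact (hP.mem_or_mem this).resolve_right hrP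


/-- `((J + (x^n)) : x) = (J : x) + (x^(n-1))` for `n ≥ 1` (lemma B). -/
lemma colonB (J : Ideal R) (x : R) (n : ℕ) (hn : 1 ≤ n) :
    (J ⊔ Ideal.span {x ^ n}).colon (Ideal.span {x}) =
      J.colon (Ideal.span {x}) ⊔ Ideal.span {x ^ (n - 1)} := by
  have hx : x ^ (n - 1) * x = x ^ n := by
    rw [← pow_succ, Nat.sub_add_cancel hn]
  ext r
  rw [Ideal.mem_colon_span_singleton, Submodule.mem_sup, Submodule.mem_sup]
  constructor
  · rintro ⟨i, hi, z, hz, hiz⟩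
    rw [Ideal.mem_span_singleton'] at hz
    obtain ⟨s, rfl⟩ := hz
    refine ⟨r - s * x ^ (n - 1), ?_, s * x ^ (n - 1), Ideal.mem_span_singleton'.2 ⟨s, rfl⟩,
      by ring⟩
    rw [Ideal.mem_colon_span_singleton]
    have : (r - s * x ^ (n - 1)) * x = i := by linear_combination -hiz - s * hx
    rw [this]; exact hi
  · rintro ⟨i, hi, z, hz, rfl⟩
    rw [Ideal.mem_colon_span_singleton] at hi
    rw [Ideal.mem_span_singleton'] at hz
    obtain ⟨s, rfl⟩ := hz
    exact ⟨i * x, hi, s * x ^ n, Ideal.mem_span_singleton'.2 ⟨s, rfl⟩,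
      by linear_combination -s * hx⟩

/-- If `(K : x) = K` then `Ass(R/(K + (x^m))) ⊆ Ass(R/(K + (x)))` (lemma E). -/
lemma assE {K : Ideal R} {x : R} (hK : K.colon (Ideal.span {x}) = K) :
    ∀ m : ℕ, 1 ≤ m → ∀ P ∈ associatedPrimes R (R ⧸ (K ⊔ Ideal.span {x ^ m})),
      P ∈ associatedPrimes R (R ⧸ (K ⊔ Ideal.span {x})) := by
  intro m hm
  induction m, hm using Nat.le_induction with
  | base => intro P hP; rwa [pow_one] at hP
  | succ m hm ih =>
    intro P hP
    rcases assC x hP with h1 | h2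
    · rw [colonB _ _ _ (by omega), hK, Nat.add_sub_cancel] at h1
      exact ih P h1
    · have hle : Ideal.span {x ^ (m + 1)} ≤ Ideal.span {x} := by
        rw [Ideal.span_singleton_le_span_singleton]
        exact dvd_pow_self x (by omega)
      rwa [sup_assoc, sup_eq_right.mpr hle] at h2

/-- Main reduction (lemma F): if `(J:x) = (J:x²)` then associated primes of `R/(J+(xⁿ))`
come from exponent `1` or `2`. -/
lemma assF {J : Ideal R} {x : R}
    (hcol : J.colon (Ideal.span {x}) = J.colon (Ideal.span {x ^ 2}))
    (n : ℕ) (hn : 1 ≤ n) {P : Ideal R}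
    (hP : P ∈ associatedPrimes R (R ⧸ (J ⊔ Ideal.span {x ^ n}))) :
    ∃ k, 0 < k ∧ k ≤ 2 ∧ P ∈ associatedPrimes R (R ⧸ (J ⊔ Ideal.span {x ^ k})) := by
  have hL : ∀ t : R, t * x ∈ J ↔ t * x ^ 2 ∈ J := by
    intro t
    rw [← Ideal.mem_colon_span_singleton, ← Ideal.mem_colon_span_singleton (x := x ^ 2), hcol]
  have hK : (J.colon (Ideal.span {x})).colon (Ideal.span {x}) = J.colon (Ideal.span {x}) := by
    ext r
    rw [Ideal.mem_colon_span_singleton, Ideal.mem_colon_span_singleton, Ideal.mem_colon_span_singleton]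
    have e : r * x * x = r * x ^ 2 := by ring
    rw [e]
    exact (hL r).symm
  rcases Nat.lt_or_ge n 2 with h | h
  · exact ⟨n, hn, by omega, hP⟩
  rcases assC x hP with h1 | h2
  · rw [colonB _ _ _ hn] at h1
    have h3 := assE hK (n - 1) (by omega) P h1
    have h4 : J.colon (Ideal.span {x}) ⊔ Ideal.span {x} =
        (J ⊔ Ideal.span {x ^ 2}).colon (Ideal.span {x}) := by
      rw [colonB J x 2 (by omega)]
      norm_num
    rw [h4] at h3
    exact ⟨2, by omega, le_rfl, assD x h3⟩
  · have hle : Ideal.span {x ^ n} ≤ Ideal.span {x} := by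
      rw [Ideal.span_singleton_le_span_singleton]
      exact dvd_pow_self x (by omega)
    rw [sup_assoc, sup_eq_right.mpr hle] at h2
    refine ⟨1, one_pos, by omega, ?_⟩
    rwa [pow_one]

lemma span3a (a b c : R) : Ideal.span {a, b, c} = Ideal.span {a, b} ⊔ Ideal.span {c} := by
  rw [show ({a, b, c} : Set R) = {a, b} ∪ {c} by ext x; simp [or_comm, or_assoc, or_left_comm], Ideal.span_union]

lemma span3b (a b c : R) : Ideal.span {a, b, c} = Ideal.span {b, c} ⊔ Ideal.span {a} := by
  rw [show ({a, b, c} : Set R) = {b, c} ∪ {a} by ext x; simp [or_comm, or_assoc, or_left_comm], Ideal.span_union]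

lemma span3c (a b c : R) : Ideal.span {a, b, c} = Ideal.span {a, c} ⊔ Ideal.span {b} := by
  rw [show ({a, b, c} : Set R) = {a, c} ∪ {b} by ext x; simp [or_comm, or_assoc, or_left_comm], Ideal.span_union]

/-- Claim 3.  Let `R` be a noetherian normal domain and `x₁, x₂, x₃` nonzero
with `ht (xᵢ, xⱼ) = 2` for `i ≠ j`, `ht (x₁, x₂, x₃) = 3`, satisfying the colon conditions
`((xᵢ^{nᵢ}, xⱼ^{nⱼ}) : x_k) = ((xᵢ^{nᵢ}, xⱼ^{nⱼ}) : x_k²)`.  Then every associated prime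
of `R/(x₁^{n₁}, x₂^{n₂}, x₃^{n₃})` is an associated prime of some
`R/(x₁^{i₁}, x₂^{i₂}, x₃^{i₃})` with `i₁ + i₂ + i₃ ≤ 6`. -/
theorem stmt_16 (R : Type) [CommRing R] [IsNoetherianRing R] [IsDomain R]
    [IsIntegrallyClosed R]
    (x₁ x₂ x₃ : R) (h1 : x₁ ≠ 0) (h2 : x₂ ≠ 0) (h3 : x₃ ≠ 0)
    (hht12 : idealHeight R (Ideal.span {x₁, x₂}) = 2)
    (hht13 : idealHeight R (Ideal.span {x₁, x₃}) = 2)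
    (hht23 : idealHeight R (Ideal.span {x₂, x₃}) = 2)
    (hht123 : idealHeight R (Ideal.span {x₁, x₂, x₃}) = 3)
    (hc3 : ∀ n₁ n₂ : ℕ, 0 < n₁ → 0 < n₂ →
      (Ideal.span {x₁ ^ n₁, x₂ ^ n₂}).colon (Ideal.span {x₃}) =
        (Ideal.span {x₁ ^ n₁, x₂ ^ n₂}).colon (Ideal.span {x₃ ^ 2}))
    (hc1 : ∀ n₂ n₃ : ℕ, 0 < n₂ → 0 < n₃ →
      (Ideal.span {x₂ ^ n₂, x₃ ^ n₃}).colon (Ideal.span {x₁}) =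
        (Ideal.span {x₂ ^ n₂, x₃ ^ n₃}).colon (Ideal.span {x₁ ^ 2}))
    (hc2 : ∀ n₁ n₃ : ℕ, 0 < n₁ → 0 < n₃ →
      (Ideal.span {x₁ ^ n₁, x₃ ^ n₃}).colon (Ideal.span {x₂}) =
        (Ideal.span {x₁ ^ n₁, x₃ ^ n₃}).colon (Ideal.span {x₂ ^ 2})) :
    ∀ n₁ n₂ n₃ : ℕ, 0 < n₁ → 0 < n₂ → 0 < n₃ →
      ∀ P ∈ associatedPrimes R (R ⧸ Ideal.span {x₁ ^ n₁, x₂ ^ n₂, x₃ ^ n₃}),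
        ∃ i₁ i₂ i₃ : ℕ, 0 < i₁ ∧ 0 < i₂ ∧ 0 < i₃ ∧ i₁ + i₂ + i₃ ≤ 6 ∧
          P ∈ associatedPrimes R (R ⧸ Ideal.span {x₁ ^ i₁, x₂ ^ i₂, x₃ ^ i₃}) := by
  intro n₁ n₂ n₃ hn₁ hn₂ hn₃ P hP
  rw [span3a] at hP
  obtain ⟨i₃, hi₃0, hi₃2, hP⟩ := assF (hc3 n₁ n₂ hn₁ hn₂) n₃ hn₃ hP
  rw [← span3a, span3b] at hP
  obtain ⟨i₁, hi₁0, hi₁2, hP⟩ := assF (hc1 n₂ i₃ hn₂ hi₃0) n₁ hn₁ hP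
  rw [← span3b, span3c] at hP
  obtain ⟨i₂, hi₂0, hi₂2, hP⟩ := assF (hc2 i₁ i₃ hi₁0 hi₃0) n₂ hn₂ hP
  rw [← span3c] at hP
  exact ⟨i₁, i₂, i₃, hi₁0, hi₂0, hi₃0, by omega, hP⟩
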